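/- Let N ≥ 1 and let f(p) = 1 + Σ_{n=1}^N a_n p^{2n} with coefficients a_n ≥ 0. Let μ be a Borel probability measure on ℝ such that ∫ |p|^{2N} dμ(p) < ∞, and let m := ∫ p dμ(p) and V := ∫ p² dμ(p) − m² be the mean and variance. Then ∫ f(p) dμ(p) ≥ f(√V). -/

import Mathlib

open MeasureTheory Set

/-- Jensen-type estimate for modifications with non-negative even
Taylor coefficients: for `f(p) = 1 + Σ_{n=1}^N a_n p^{2n}` with `a_n ≥ 0` and a
probability measure `μ` with finite `2N`-th moment, mean `m` and variance `V`,
one has `∫ f dμ ≥ f(√V)`. -/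
theorem jensen_modification_bound
    (N : ℕ) (hN : 1 ≤ N) (a : ℕ → ℝ) (ha : ∀ n, 0 ≤ a n)
    (f : ℝ → ℝ)
    (hf : ∀ p : ℝ, f p = 1 + ∑ n ∈ Finset.Icc 1 N, a n * p ^ (2 * n))
    (μ : Measure ℝ) [IsProbabilityMeasure μ]
    (hmom : Integrable (fun p : ℝ => |p| ^ (2 * N)) μ)
    (m : ℝ) (hm : m = ∫ p : ℝ, p ∂μ)
    (V : ℝ) (hV : V = (∫ p : ℝ, p ^ 2 ∂μ) - m ^ 2) :
    (∫ p : ℝ, f p ∂μ) ≥ f (Real.sqrt V) := by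
  -- integrability of all powers p^k, k ≤ 2N
  have hint : ∀ k : ℕ, k ≤ 2 * N → Integrable (fun p : ℝ => p ^ k) μ := by
    intro k hk
    refine ((integrable_const (1 : ℝ)).add hmom).mono ?_ ?_
    · exact (measurable_id.pow_const k).aestronglyMeasurable
    · refine Filter.Eventually.of_forall fun p => ?_
      have h1 : |p ^ k| = |p| ^ k := abs_pow p k
      have h2 : |p| ^ k ≤ 1 + |p| ^ (2 * N) := by
        rcases le_total (|p|) 1 with h | h
        · have := pow_le_one₀ (abs_nonneg p) h (n:=k)
          nlinarith [pow_nonneg (abs_nonneg p) (2 * N)]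
        · have := pow_le_pow_right₀ h hk
          nlinarith
      have h3 : |(1 : ℝ) + |p| ^ (2 * N)| = 1 + |p| ^ (2 * N) := by
        rw [abs_of_nonneg]; positivity
      simpa [h1, h3] using h2
  have hint2 : Integrable (fun p : ℝ => p ^ 2) μ := hint 2 (by omega)
  have hint1 : Integrable (fun p : ℝ => p) μ := by
    simpa using hint 1 (by omega)
  -- V ≥ 0
  have hsq : (∫ p : ℝ, p ∂μ) ^ 2 ≤ ∫ p : ℝ, p ^ 2 ∂μ := by
    have hcv : ConvexOn ℝ (univ : Set ℝ) (fun x : ℝ => x ^ 2) :=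
      (Even.convexOn_pow (by norm_num))
    simpa using hcv.map_integral_le (by fun_prop)
      isClosed_univ (Filter.Eventually.of_forall fun x => trivial) hint1
      (by exact hint2)
  have hV0 : 0 ≤ V := by rw [hV, hm]; linarith
  -- key: V^n ≤ ∫ p^(2n) for 1 ≤ n ≤ N
  have key : ∀ n ∈ Finset.Icc 1 N, V ^ n ≤ ∫ p : ℝ, p ^ (2 * n) ∂μ := by
    intro n hn
    simp only [Finset.mem_Icc] at hn
    have hcv : ConvexOn ℝ (Ici (0:ℝ)) (fun x : ℝ => x ^ n) := convexOn_pow n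
    have hj : (∫ p : ℝ, p ^ 2 ∂μ) ^ n ≤ ∫ p : ℝ, (p ^ 2) ^ n ∂μ := by
      have := hcv.map_integral_le (by fun_prop) isClosed_Ici
        (Filter.Eventually.of_forall fun x => (sq_nonneg x : (0:ℝ) ≤ x ^ 2))
        hint2 (by
          have h := hint (2 * n) (by omega)
          have heq : ((fun x : ℝ => x ^ n) ∘ fun x : ℝ => x ^ 2) = fun p : ℝ => p ^ (2 * n) := by
            funext p; simp [Function.comp, ← pow_mul, mul_comm]
          rw [heq]; exact h)
      simpa [Function.comp, ← pow_mul] using this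
    have h2 : V ≤ ∫ p : ℝ, p ^ 2 ∂μ := by rw [hV]; nlinarith [sq_nonneg m]
    calc V ^ n ≤ (∫ p : ℝ, p ^ 2 ∂μ) ^ n := pow_le_pow_left₀ hV0 h2 n
      _ ≤ ∫ p : ℝ, (p ^ 2) ^ n ∂μ := hj
      _ = ∫ p : ℝ, p ^ (2 * n) ∂μ := by simp [← pow_mul]
  -- expand integrals
  have hintsum : ∀ n ∈ Finset.Icc 1 N, Integrable (fun p : ℝ => a n * p ^ (2 * n)) μ := by
    intro n hn
    simp only [Finset.mem_Icc] at hn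
    exact (hint (2 * n) (by omega)).const_mul _
  have hexp : (∫ p : ℝ, f p ∂μ)
      = 1 + ∑ n ∈ Finset.Icc 1 N, a n * ∫ p : ℝ, p ^ (2 * n) ∂μ := by
    simp only [hf]
    rw [integral_add (integrable_const 1) (integrable_finset_sum _ hintsum),
      integral_finset_sum _ hintsum]
    rw [integral_const, probReal_univ, smul_eq_mul, mul_one]
    congr 1
    exact Finset.sum_congr rfl fun n _ => integral_const_mul (a n) _
  have hfs : f (Real.sqrt V) = 1 + ∑ n ∈ Finset.Icc 1 N, a n * V ^ n := by
    rw [hf]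
    congr 1
    refine Finset.sum_congr rfl fun n hn => ?_
    rw [pow_mul, Real.sq_sqrt hV0]
  rw [hexp, hfs, ge_iff_le]
  gcongr with n hn
  · exact ha n
  · exact key n hn
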